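/- Under the directional compactification u_{N/2} = 1/s, u_i = x_i/s, a solution u(t) of the ODE system u_i' = N²(u_{i-1} − 2u_i + u_{i+1}) + λ e^{u_i^m} (with boundary conventions u₀ = u_N = 0) with u_{N/2}(t) > 0 corresponds, after the time rescaling dτ/dt = s^{-1} e^{1/s^m}, to a solution of the desingularized system ṡ = −e^{−1/s^m} Δ_{N/2} − λ s, ẋ_i = −x_i s^{-1} e^{−1/s^m} Δ_{N/2} − λ x_i + s^{-1} e^{−1/s^m} Δ_i + λ e^{−(1−x_i^m)/s^m}, where Δ_i = N²(x_{i−1} − 2x_i + x_{i+1}) with x_{N/2} := 1, x₀ = x_N := 0. -/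

import Mathlib

open MeasureTheory

open Topology

/-- `s = 1/u_{N/2}` for the directional compactification. -/
noncomputable def sVal (N : ℕ) (u : ℝ → ℕ → ℝ) (t : ℝ) : ℝ := (u t (N / 2))⁻¹

/-- `x_i = u_i / u_{N/2}`. -/
noncomputable def xVal (N : ℕ) (u : ℝ → ℕ → ℝ) (t : ℝ) (i : ℕ) : ℝ :=
  u t i * sVal N u t

/-- `Δ_i = N² (x_{i-1} - 2 x_i + x_{i+1})`. -/
noncomputable def ΔVal (N : ℕ) (u : ℝ → ℕ → ℝ) (t : ℝ) (i : ℕ) : ℝ :=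
  (N : ℝ) ^ 2 * (xVal N u t (i - 1) - 2 * xVal N u t i + xVal N u t (i + 1))

/-- Rescaled time `τ(t)`, with `dτ/dt = s⁻¹ e^{1/s^m} = u_{N/2} e^{u_{N/2}^m}`...
here `dτ/dt = s e^{1/s^m}` written via `u`: `τ(t) = ∫₀ᵗ (u_{N/2})⁻¹ e^{u_{N/2}^m}`. -/
noncomputable def τof (N m : ℕ) (u : ℝ → ℕ → ℝ) (t : ℝ) : ℝ :=
  ∫ σ in (0 : ℝ)..t, (u σ (N / 2))⁻¹ * Real.exp (u σ (N / 2) ^ m)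

/-- The directional compactification plus time-scale desingularization transforms solutions
of the discretized ODE system `u_i' = N²(u_{i-1} - 2u_i + u_{i+1}) + λ e^{u_i^m}` into
solutions of the desingularized vector field. -/
theorem stmt13 (N m : ℕ) (hN : 4 ≤ N) (hNe : Even N) (hm : 0 < m)
    (lam : ℝ) (hlam : 0 < lam)
    (u : ℝ → ℕ → ℝ) (T : ℝ) (hT : 0 < T)
    (hbc : ∀ t, u t 0 = 0 ∧ u t N = 0)
    (hpos : ∀ t ∈ Set.Ico (0 : ℝ) T, 0 < u t (N / 2))
    (hode : ∀ t ∈ Set.Ico (0 : ℝ) T, ∀ i, 1 ≤ i → i ≤ N - 1 →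
      HasDerivAt (fun t' => u t' i)
        ((N : ℝ) ^ 2 * (u t (i - 1) - 2 * u t i + u t (i + 1))
          + lam * Real.exp (u t i ^ m)) t)
    (tinv : ℝ → ℝ)
    (htinv : ∀ t ∈ Set.Ico (0 : ℝ) T, tinv (τof N m u t) = t) :
    ∀ t ∈ Set.Ioo (0 : ℝ) T,
      HasDerivAt (fun τ => sVal N u (tinv τ))
        (-Real.exp (-1 / sVal N u t ^ m) * ΔVal N u t (N / 2) - lam * sVal N u t)
        (τof N m u t) ∧
      ∀ i, 1 ≤ i → i ≤ N - 1 → i ≠ N / 2 →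
        HasDerivAt (fun τ => xVal N u (tinv τ) i)
          (-xVal N u t i * (sVal N u t)⁻¹ * Real.exp (-1 / sVal N u t ^ m)
              * ΔVal N u t (N / 2)
            - lam * xVal N u t i
            + (sVal N u t)⁻¹ * Real.exp (-1 / sVal N u t ^ m) * ΔVal N u t i
            + lam * Real.exp (-(1 - xVal N u t i ^ m) / sVal N u t ^ m))
          (τof N m u t) := by
  intro t ht
  have htI : t ∈ Set.Ico (0 : ℝ) T := ⟨le_of_lt ht.1, ht.2⟩
  have hNhalf1 : 1 ≤ N / 2 := by omega
  have hNhalf2 : N / 2 ≤ N - 1 := by omega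
  set W : ℝ := u t (N / 2) with hWdef
  have hW : 0 < W := hpos t htI
  have hWne : W ≠ 0 := hW.ne'
  set W' : ℝ := (N : ℝ) ^ 2 * (u t (N / 2 - 1) - 2 * u t (N / 2) + u t (N / 2 + 1))
      + lam * Real.exp (u t (N / 2) ^ m) with hW'def
  have hwderiv : HasDerivAt (fun t' => u t' (N / 2)) W' t :=
    hode t htI (N / 2) hNhalf1 hNhalf2
  set v : ℝ → ℝ := fun σ => (u σ (N / 2))⁻¹ * Real.exp (u σ (N / 2) ^ m) with hvdef
  have hvcont : ∀ σ ∈ Set.Ico (0 : ℝ) T, ContinuousAt v σ := by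
    intro σ hσ
    have hc : ContinuousAt (fun t' => u t' (N / 2)) σ :=
      (hode σ hσ (N / 2) hNhalf1 hNhalf2).continuousAt
    exact (hc.inv₀ (hpos σ hσ).ne').mul
      (Real.continuous_exp.continuousAt.comp (hc.pow m))
  have hτ : HasStrictDerivAt (τof N m u) (v t) t := by
    apply intervalIntegral.integral_hasStrictDerivAt_right
    · apply ContinuousOn.intervalIntegrable
      intro σ hσ
      have hσ' : σ ∈ Set.Ico (0 : ℝ) T := by
        rw [Set.uIcc_of_le (le_of_lt ht.1)] at hσ
        exact ⟨hσ.1, lt_of_le_of_lt hσ.2 ht.2⟩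
      exact (hvcont σ hσ').continuousWithinAt
    · exact ContinuousAt.stronglyMeasurableAtFilter isOpen_Ioo
        (fun σ hσ => hvcont σ ⟨le_of_lt hσ.1, hσ.2⟩) t ht
    · exact hvcont t htI
  have hvt : 0 < v t := by
    have : v t = W⁻¹ * Real.exp (W ^ m) := rfl
    rw [this]
    positivity
  have hfg : ∀ᶠ t' in 𝓝 t, tinv (τof N m u t') = t' := by
    filter_upwards [Ioo_mem_nhds ht.1 ht.2] with t' ht'
    exact htinv t' ⟨le_of_lt ht'.1, ht'.2⟩
  have htinvS : HasStrictDerivAt tinv (v t)⁻¹ (τof N m u t) :=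
    hτ.to_local_left_inverse hvt.ne' hfg
  have htinvD : HasDerivAt tinv (v t)⁻¹ (τof N m u t) := htinvS.hasDerivAt
  have htinvt : tinv (τof N m u t) = t := htinv t htI
  have comp : ∀ {F : ℝ → ℝ} {F' : ℝ}, HasDerivAt F F' t →
      HasDerivAt (fun τ => F (tinv τ)) (F' * (v t)⁻¹) (τof N m u t) := by
    intro F F' hF
    have hF' : HasDerivAt F F' (tinv (τof N m u t)) := by rw [htinvt]; exact hF
    exact HasDerivAt.comp (τof N m u t) hF' htinvD
  -- key simp facts
  have hvinv : (v t)⁻¹ = W * (Real.exp (W ^ m))⁻¹ := by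
    show (W⁻¹ * Real.exp (W ^ m))⁻¹ = _
    rw [mul_inv, inv_inv]
  have hsval : sVal N u t = W⁻¹ := rfl
  have hexp1 : Real.exp (-1 / sVal N u t ^ m) = (Real.exp (W ^ m))⁻¹ := by
    rw [hsval, ← Real.exp_neg]
    congr 1
    rw [inv_pow]
    field_simp
  have hEne : Real.exp (W ^ m) ≠ 0 := (Real.exp_pos _).ne'
  constructor
  · have hs : HasDerivAt (fun t' => sVal N u t') (-W' / W ^ 2) t := by
      simpa [sVal, hWdef, Pi.inv_def] using hwderiv.inv hWne
    have := comp hs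
    convert this using 1
    rw [hexp1, ΔVal]
    simp only [xVal, sVal, hvinv]
    rw [hW'def]
    simp only [← hWdef]
    field_simp
    ring
  · intro i hi1 hi2 hi3
    have hui : HasDerivAt (fun t' => u t' i)
        ((N : ℝ) ^ 2 * (u t (i - 1) - 2 * u t i + u t (i + 1))
          + lam * Real.exp (u t i ^ m)) t := hode t htI i hi1 hi2
    have hx : HasDerivAt (fun t' => xVal N u t' i)
        (((N : ℝ) ^ 2 * (u t (i - 1) - 2 * u t i + u t (i + 1))
            + lam * Real.exp (u t i ^ m)) * W⁻¹ + u t i * (-W' / W ^ 2)) t := by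
      simpa [xVal, sVal, hWdef, Pi.inv_def, Pi.mul_def] using hui.mul (hwderiv.inv hWne)
    have hmain := comp hx
    convert hmain using 1
    have hexp2 : Real.exp (-(1 - xVal N u t i ^ m) / sVal N u t ^ m)
        = Real.exp (u t i ^ m) * (Real.exp (W ^ m))⁻¹ := by
      rw [← Real.exp_neg, ← Real.exp_add]
      congr 1
      rw [xVal, sVal, mul_pow]
      simp only [← hWdef]
      field_simp
      rw [one_div, inv_pow, mul_add, mul_neg, inv_mul_cancel₀ (pow_ne_zero m hWne)]
      ring
    rw [hexp1, hexp2, ΔVal, ΔVal]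
    simp only [xVal, sVal, hvinv]
    rw [hW'def]
    simp only [← hWdef]
    field_simp
    ring
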